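/- Let f : ℝ → ℝ belong to S_{μ,L}(ℝ) with minimizer x⋆, and let X solve the ODE Ẍ + (3/t)Ẋ + f′(X) = 0 with X(0) = x₀ ≠ x⋆, Ẋ(0) = 0. Then: (i) there exists a root t ∈ (0, 7.6635/√μ) of X(t) − x⋆; (ii) for every t > 0 with X(t) = x⋆ there exists t′ ∈ (t, t + 7.6635/√μ) with X(t′) = x⋆; and (iii) whenever 0 < a < b < c satisfy X(a) = X(b) = X(c) = x⋆, one has c − a > π/√L. -/

import Mathlib

open Set Filter Topology

set_option maxHeartbeats 1000000

noncomputable section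

/-- The class `S_{μ,L}(ℝ)` in dimension one: convex, continuously differentiable `f` with
`L`-Lipschitz derivative such that `f(x) - μx²/2` is convex. -/
def MemS1 (μ L : ℝ) (f : ℝ → ℝ) : Prop :=
  ConvexOn ℝ Set.univ f ∧ ContDiff ℝ 1 f ∧
    (∀ x y : ℝ, |deriv f x - deriv f y| ≤ L * |x - y|) ∧
    ConvexOn ℝ Set.univ (fun x => f x - μ / 2 * x ^ 2)

/-- One-dimensional Nesterov ODE solution: `Ẍ + (3/t)Ẋ + f'(X) = 0`, `X(0) = x₀`,
`Ẋ(0) = 0`, C² on `(0,∞)` and C¹ on `[0,∞)`. -/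
def NesterovSol1 (f : ℝ → ℝ) (x0 : ℝ) (X : ℝ → ℝ) : Prop :=
  X 0 = x0 ∧
  ContDiffOn ℝ 1 X (Set.Ici 0) ∧
  ContDiffOn ℝ 2 X (Set.Ioi 0) ∧
  derivWithin X (Set.Ici 0) 0 = 0 ∧
  ∀ t > (0:ℝ), deriv (deriv X) t + (3 / t) * deriv X t + deriv f (X t) = 0

/-- `φ(x) = x - arctan x`, the phase function for the comparison Bessel-type solution. -/
def phiA (x : ℝ) : ℝ := x - Real.arctan x

lemma phiA_hasDeriv (x : ℝ) : HasDerivAt phiA (x ^ 2 / (1 + x ^ 2)) x := by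
  have h := (hasDerivAt_id x).sub (Real.hasDerivAt_arctan x)
  have h2 : (1:ℝ) - 1 / (1 + x ^ 2) = x ^ 2 / (1 + x ^ 2) := by
    have : (1:ℝ) + x ^ 2 ≠ 0 := by positivity
    field_simp
    ring
  have h3 : HasDerivAt phiA (1 - 1/(1 + x ^ 2)) x := by
    exact h
  rwa [h2] at h3

lemma phiA_strictMonoOn : StrictMonoOn phiA (Ici 0) := by
  apply strictMonoOn_of_deriv_pos (convex_Ici 0)
  · exact fun x _ => ((phiA_hasDeriv x).continuousAt).continuousWithinAt
  · intro x hx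
    rw [interior_Ici] at hx
    rw [(phiA_hasDeriv x).deriv]
    have hx0 : 0 < x := hx
    positivity

/-- next phase-π point exists within `3π/2`. -/
lemma exists_x2 (x₀ : ℝ) (hx₀ : 0 ≤ x₀) :
    ∃ x₂, x₀ < x₂ ∧ x₂ < x₀ + 3 * Real.pi / 2 ∧ phiA x₂ = phiA x₀ + Real.pi := by
  have hcont : ContinuousOn phiA (Icc x₀ (x₀ + 3 * Real.pi / 2)) :=
    fun x _ => ((phiA_hasDeriv x).continuousAt).continuousWithinAt
  have hπ : 0 < Real.pi := Real.pi_pos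
  have hlt : phiA x₀ + Real.pi < phiA (x₀ + 3 * Real.pi / 2) := by
    have h1 : Real.arctan (x₀ + 3 * Real.pi / 2) < Real.pi / 2 := Real.arctan_lt_pi_div_two _
    have h2 : 0 ≤ Real.arctan x₀ := by
      rw [← Real.arctan_zero]
      exact Real.arctan_strictMono.monotone hx₀
    simp only [phiA]
    nlinarith
  have hmem : phiA x₀ + Real.pi ∈ Ioo (phiA x₀) (phiA (x₀ + 3 * Real.pi / 2)) :=
    ⟨by linarith, hlt⟩
  have hsub := intermediate_value_Ioo (by nlinarith : x₀ ≤ x₀ + 3 * Real.pi / 2) hcont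
  obtain ⟨x₂, hx₂mem, hx₂⟩ := hsub hmem
  exact ⟨x₂, hx₂mem.1, hx₂mem.2, hx₂⟩


/-- numerator of the Bessel-3/2-type comparison solution -/
def NN (ψ x : ℝ) : ℝ := Real.sin (x + ψ) - x * Real.cos (x + ψ)

lemma NN_eq (x₀ x : ℝ) :
    NN (Real.arctan x₀ - x₀) x =
      Real.sqrt (1 + x ^ 2) * Real.sin (phiA x - phiA x₀) := by
  have hx : x + (Real.arctan x₀ - x₀) = (phiA x - phiA x₀) + Real.arctan x := by
    simp [phiA]; ring
  have hspos : (0:ℝ) < Real.sqrt (1 + x ^ 2) := Real.sqrt_pos.mpr (by positivity)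
  have hs2 : Real.sqrt (1 + x ^ 2) ^ 2 = 1 + x ^ 2 := Real.sq_sqrt (by positivity)
  rw [NN, hx, Real.sin_add, Real.cos_add, Real.sin_arctan, Real.cos_arctan]
  field_simp
  linear_combination (-Real.sin (phiA x - phiA x₀)) * hs2

lemma NN_hasDeriv (ψ x : ℝ) : HasDerivAt (NN ψ) (x * Real.sin (x + ψ)) x := by
  have h1 : HasDerivAt (fun x : ℝ => x + ψ) 1 x := by
    simpa using (hasDerivAt_id x).add_const ψ
  have hsin : HasDerivAt (fun x : ℝ => Real.sin (x + ψ)) (Real.cos (x + ψ)) x := by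
    simpa [Function.comp_def] using (Real.hasDerivAt_sin (x + ψ)).comp x h1
  have hcos : HasDerivAt (fun x : ℝ => Real.cos (x + ψ)) (-Real.sin (x + ψ)) x := by
    simpa [Function.comp_def] using (Real.hasDerivAt_cos (x + ψ)).comp x h1
  have h := hsin.sub ((hasDerivAt_id x).mul hcos)
  refine h.congr_deriv ?_
  simp [id_eq]

def wMu (k ψ t : ℝ) : ℝ := NN ψ (k * t) / (t ^ 2 * Real.sqrt t)

def W1Mu (k ψ t : ℝ) : ℝ :=
  k ^ 2 * t * Real.sqrt t * Real.sin (k * t + ψ) - 5 / 2 * NN ψ (k * t) / Real.sqrt t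

lemma NNc_hasDeriv (k ψ t : ℝ) :
    HasDerivAt (fun t => NN ψ (k * t)) (k * (k * t * Real.sin (k * t + ψ))) t := by
  have h1 : HasDerivAt (fun t : ℝ => k * t) k t := by
    simpa using (hasDerivAt_id t).const_mul k
  simpa [mul_comm, Function.comp_def] using (NN_hasDeriv ψ (k * t)).comp t h1

lemma wMu_hasDeriv (k ψ : ℝ) {t : ℝ} (ht : 0 < t) :
    HasDerivAt (fun t => wMu k ψ t) (W1Mu k ψ t / t ^ 3) t := by
  have hs : HasDerivAt Real.sqrt (1 / (2 * Real.sqrt t)) t := Real.hasDerivAt_sqrt ht.ne'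
  have hspos : 0 < Real.sqrt t := Real.sqrt_pos.mpr ht
  have hden : HasDerivAt (fun t : ℝ => t ^ 2 * Real.sqrt t)
      (2 * t * Real.sqrt t + t ^ 2 * (1 / (2 * Real.sqrt t))) t := by
    have hp : HasDerivAt (fun t : ℝ => t ^ 2) (2 * t) t := by
      simpa using hasDerivAt_pow 2 t
    simpa [Pi.mul_def] using hp.mul hs
  have hne : t ^ 2 * Real.sqrt t ≠ 0 := by positivity
  have h := (NNc_hasDeriv k ψ t).div hden hne
  refine h.congr_deriv ?_
  set s := Real.sqrt t with hsdef
  have hs2 : s ^ 2 = t := Real.sq_sqrt ht.le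
  rw [W1Mu, NN]
  rw [← hs2]
  rw [Real.sqrt_sq hspos.le]
  have hsne : s ≠ 0 := by nlinarith
  field_simp
  ring

lemma W1Mu_hasDeriv (k ψ : ℝ) {t : ℝ} (ht : 0 < t) :
    HasDerivAt (fun t => W1Mu k ψ t)
      (-(k ^ 2) * t ^ 3 * wMu k ψ t + 5 / 4 * t * wMu k ψ t) t := by
  have hs : HasDerivAt Real.sqrt (1 / (2 * Real.sqrt t)) t := Real.hasDerivAt_sqrt ht.ne'
  have hspos : 0 < Real.sqrt t := Real.sqrt_pos.mpr ht
  have h1 : HasDerivAt (fun t : ℝ => k * t + ψ) k t := by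
    simpa using ((hasDerivAt_id t).const_mul k).add_const ψ
  have hsin : HasDerivAt (fun t : ℝ => Real.sin (k * t + ψ)) (k * Real.cos (k * t + ψ)) t := by
    simpa [mul_comm, Function.comp_def] using (Real.hasDerivAt_sin (k * t + ψ)).comp t h1
  have hA : HasDerivAt (fun t : ℝ => k ^ 2 * t * Real.sqrt t * Real.sin (k * t + ψ))
      ((k ^ 2 * Real.sqrt t + k ^ 2 * t * (1 / (2 * Real.sqrt t))) * Real.sin (k * t + ψ)
        + k ^ 2 * t * Real.sqrt t * (k * Real.cos (k * t + ψ))) t := by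
    have hts : HasDerivAt (fun t : ℝ => k ^ 2 * t * Real.sqrt t)
        (k ^ 2 * Real.sqrt t + k ^ 2 * t * (1 / (2 * Real.sqrt t))) t := by
      simpa [mul_comm, mul_assoc, Pi.mul_def] using (((hasDerivAt_id t).const_mul (k ^ 2)).mul hs)
    exact hts.mul hsin
  have hB : HasDerivAt (fun t : ℝ => 5 / 2 * NN ψ (k * t) / Real.sqrt t)
      ((5 / 2 * (k * (k * t * Real.sin (k * t + ψ))) * Real.sqrt t
        - 5 / 2 * NN ψ (k * t) * (1 / (2 * Real.sqrt t))) / Real.sqrt t ^ 2) t := by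
    exact (((NNc_hasDeriv k ψ t).const_mul (5/2)).div hs hspos.ne').congr_deriv (by ring)
  have h := hA.sub hB
  refine h.congr_deriv ?_
  set s := Real.sqrt t with hsdef
  have hs2 : s ^ 2 = t := Real.sq_sqrt ht.le
  rw [wMu, NN]
  rw [← hs2]
  rw [Real.sqrt_sq hspos.le]
  have hsne : s ≠ 0 := by positivity
  field_simp
  ring

def wL (k p t : ℝ) : ℝ := Real.sin (k * (t - p)) / (t * Real.sqrt t)

def W1L (k p t : ℝ) : ℝ :=
  k * t * Real.sqrt t * Real.cos (k * (t - p)) - 3 / 2 * Real.sqrt t * Real.sin (k * (t - p))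

lemma sinL_hasDeriv (k p t : ℝ) :
    HasDerivAt (fun t => Real.sin (k * (t - p))) (k * Real.cos (k * (t - p))) t := by
  have h1 : HasDerivAt (fun t : ℝ => k * (t - p)) k t := by
    simpa using ((hasDerivAt_id t).sub_const p).const_mul k
  simpa [mul_comm, Function.comp_def] using (Real.hasDerivAt_sin (k * (t - p))).comp t h1

lemma cosL_hasDeriv (k p t : ℝ) :
    HasDerivAt (fun t => Real.cos (k * (t - p))) (-(k * Real.sin (k * (t - p)))) t := by
  have h1 : HasDerivAt (fun t : ℝ => k * (t - p)) k t := by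
    simpa using ((hasDerivAt_id t).sub_const p).const_mul k
  simpa [mul_comm, Function.comp_def] using (Real.hasDerivAt_cos (k * (t - p))).comp t h1

lemma wL_hasDeriv (k p : ℝ) {t : ℝ} (ht : 0 < t) :
    HasDerivAt (fun t => wL k p t) (W1L k p t / t ^ 3) t := by
  have hs : HasDerivAt Real.sqrt (1 / (2 * Real.sqrt t)) t := Real.hasDerivAt_sqrt ht.ne'
  have hspos : 0 < Real.sqrt t := Real.sqrt_pos.mpr ht
  have hden : HasDerivAt (fun t : ℝ => t * Real.sqrt t)
      (Real.sqrt t + t * (1 / (2 * Real.sqrt t))) t := by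
    simpa [Pi.mul_def] using (hasDerivAt_id t).mul hs
  have hne : t * Real.sqrt t ≠ 0 := by positivity
  have h := (sinL_hasDeriv k p t).div hden hne
  refine h.congr_deriv ?_
  set s := Real.sqrt t with hsdef
  have hs2 : s ^ 2 = t := Real.sq_sqrt ht.le
  rw [W1L]
  rw [← hs2]
  rw [Real.sqrt_sq hspos.le]
  have hsne : s ≠ 0 := by positivity
  field_simp
  ring

lemma W1L_hasDeriv (k p : ℝ) {t : ℝ} (ht : 0 < t) :
    HasDerivAt (fun t => W1L k p t)
      (-(k ^ 2) * t ^ 3 * wL k p t - 3 / 4 * t * wL k p t) t := by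
  have hs : HasDerivAt Real.sqrt (1 / (2 * Real.sqrt t)) t := Real.hasDerivAt_sqrt ht.ne'
  have hspos : 0 < Real.sqrt t := Real.sqrt_pos.mpr ht
  have hts : HasDerivAt (fun t : ℝ => k * t * Real.sqrt t)
      (k * Real.sqrt t + k * t * (1 / (2 * Real.sqrt t))) t := by
    simpa [mul_comm, mul_assoc, Pi.mul_def] using ((hasDerivAt_id t).const_mul k).mul hs
  have hA := hts.mul (cosL_hasDeriv k p t)
  have hB : HasDerivAt (fun t : ℝ => 3 / 2 * Real.sqrt t * Real.sin (k * (t - p)))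
      (3 / 2 * (1 / (2 * Real.sqrt t)) * Real.sin (k * (t - p))
        + 3 / 2 * Real.sqrt t * (k * Real.cos (k * (t - p)))) t := by
    simpa [mul_comm, mul_assoc, Pi.mul_def] using ((hs.const_mul (3/2)).mul (sinL_hasDeriv k p t))
  have h := hA.sub hB
  refine h.congr_deriv ?_
  set s := Real.sqrt t with hsdef
  have hs2 : s ^ 2 = t := Real.sq_sqrt ht.le
  rw [wL]
  rw [← hs2]
  rw [Real.sqrt_sq hspos.le]
  have hsne : s ≠ 0 := by positivity
  field_simp
  ring

lemma NN_props (x₀ : ℝ) (hx₀ : 0 ≤ x₀) :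
    ∃ x₂, x₀ < x₂ ∧ x₂ < x₀ + 3 * Real.pi / 2 ∧
      NN (Real.arctan x₀ - x₀) x₀ = 0 ∧ NN (Real.arctan x₀ - x₀) x₂ = 0 ∧
      (∀ x ∈ Ioo x₀ x₂, 0 < NN (Real.arctan x₀ - x₀) x) ∧
      Real.sin (x₂ + (Real.arctan x₀ - x₀)) < 0 := by
  obtain ⟨x₂, h1, h2, h3⟩ := exists_x2 x₀ hx₀
  refine ⟨x₂, h1, h2, ?_, ?_, ?_, ?_⟩
  · rw [NN_eq]; simp
  · rw [NN_eq, h3]; simp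
  · intro x hx
    rw [NN_eq]
    have hxpos : 0 ≤ x := hx₀.trans hx.1.le
    have hlo : 0 < phiA x - phiA x₀ := by
      have := phiA_strictMonoOn (mem_Ici.mpr hx₀) (mem_Ici.mpr hxpos) hx.1
      linarith
    have hhi : phiA x - phiA x₀ < Real.pi := by
      have := phiA_strictMonoOn (mem_Ici.mpr hxpos) (mem_Ici.mpr (hx₀.trans h1.le)) hx.2
      rw [h3] at this; linarith
    have hsin : 0 < Real.sin (phiA x - phiA x₀) := Real.sin_pos_of_pos_of_lt_pi hlo hhi
    have : 0 < Real.sqrt (1 + x ^ 2) := Real.sqrt_pos.mpr (by positivity)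
    positivity
  · -- x₂ + ψ = π + arctan x₂
    have hx2pos : 0 < x₂ := lt_of_le_of_lt hx₀ h1
    have harg : x₂ + (Real.arctan x₀ - x₀) = Real.pi + Real.arctan x₂ := by
      have := h3
      simp only [phiA] at this
      linarith
    rw [harg]
    have hat : 0 < Real.arctan x₂ := by
      rw [← Real.arctan_zero]
      exact Real.arctan_strictMono hx2pos
    have hat2 : Real.arctan x₂ < Real.pi := lt_trans (Real.arctan_lt_pi_div_two x₂) (by linarith [Real.pi_pos])
    have := Real.sin_pos_of_pos_of_lt_pi hat hat2
    rw [add_comm, Real.sin_add_pi]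
    linarith

/-- If `V` has nonpositive derivative on `(p,q]` and tends to `0` at `p⁺`, then `V q ≤ 0`. -/
lemma Vq_nonpos {V V' : ℝ → ℝ} {p q : ℝ} (hpq : p < q)
    (hd : ∀ t ∈ Ioc p q, HasDerivAt V (V' t) t)
    (hd0 : ∀ t ∈ Ioc p q, V' t ≤ 0)
    (hlim : Tendsto V (𝓝[>] p) (𝓝 0)) : V q ≤ 0 := by
  have key : ∀ s ∈ Ioo p q, V q ≤ V s := by
    intro s hs
    have hanti : AntitoneOn V (Icc s q) := by
      apply antitoneOn_of_deriv_nonpos (convex_Icc s q)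
      · intro x hx
        exact (hd x ⟨lt_of_lt_of_le hs.1 hx.1, hx.2⟩).continuousAt.continuousWithinAt
      · intro x hx
        rw [interior_Icc] at hx
        exact (hd x ⟨hs.1.trans hx.1, hx.2.le⟩).differentiableAt.differentiableWithinAt
      · intro x hx
        rw [interior_Icc] at hx
        rw [(hd x ⟨hs.1.trans hx.1, hx.2.le⟩).deriv]
        exact hd0 x ⟨hs.1.trans hx.1, hx.2.le⟩
    exact hanti ⟨le_refl s, hs.2.le⟩ ⟨hs.2.le, le_refl q⟩ hs.2.le
  have hev : ∀ᶠ s in 𝓝[>] p, V q ≤ V s := by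
    filter_upwards [Ioo_mem_nhdsGT_of_mem ⟨le_refl p, hpq⟩] with s hs
    exact key s hs
  exact ge_of_tendsto hlim hev

/-- If `V` has positive derivative on `(p,q)`, is continuous on `[p,q]` with `V p = 0`,
then `0 < V q`. -/
lemma Vq_pos {V V' : ℝ → ℝ} {p q : ℝ} (hpq : p < q)
    (hc : ContinuousOn V (Icc p q))
    (hd : ∀ t ∈ Ioo p q, HasDerivAt V (V' t) t)
    (hd0 : ∀ t ∈ Ioo p q, 0 < V' t)
    (hVp : V p = 0) : 0 < V q := by
  have hmono : StrictMonoOn V (Icc p q) := by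
    apply strictMonoOn_of_deriv_pos (convex_Icc p q) hc
    intro x hx
    rw [interior_Icc] at hx
    rw [(hd x hx).deriv]
    exact hd0 x hx
  have := hmono ⟨le_refl p, hpq.le⟩ ⟨hpq.le, le_refl q⟩ hpq
  linarith [hVp ▸ this]

lemma abs_sin_le_of_nonneg {x : ℝ} (hx : 0 ≤ x) : |Real.sin x| ≤ x := by
  rcases le_or_gt x 1 with h | h
  · rw [abs_of_nonneg (Real.sin_nonneg_of_nonneg_of_le_pi hx
      (h.trans (by linarith [Real.pi_gt_three])))]
    exact Real.sin_le hx
  · calc |Real.sin x| ≤ 1 := Real.abs_sin_le_one x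
      _ ≤ x := h.le

lemma abs_NN_le {x : ℝ} (hx : 0 ≤ x) : |NN 0 x| ≤ 2 * x := by
  have h1 : |Real.sin (x + 0)| ≤ x := by rw [add_zero]; exact abs_sin_le_of_nonneg hx
  have h2 : |x * Real.cos (x + 0)| ≤ x := by
    rw [abs_mul, abs_of_nonneg hx]
    nlinarith [Real.abs_cos_le_one (x + 0), abs_nonneg x]
  calc |NN 0 x| ≤ |Real.sin (x + 0)| + |x * Real.cos (x + 0)| := abs_sub _ _
    _ ≤ 2 * x := by linarith

def VMu (k ψ : ℝ) (Y : ℝ → ℝ) (t : ℝ) : ℝ :=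
  t ^ 3 * deriv Y t * wMu k ψ t - Y t * W1Mu k ψ t
def VMu' (k ψ μ : ℝ) (Y g : ℝ → ℝ) (t : ℝ) : ℝ :=
  t ^ 3 * wMu k ψ t * (μ * Y t - g t) - 5 / 4 * t * Y t * wMu k ψ t

lemma VMu_hasDeriv {k ψ μ : ℝ} (hk2 : k ^ 2 = μ) (Y g : ℝ → ℝ) {t : ℝ} (ht : 0 < t)
    (hYd : HasDerivAt Y (deriv Y t) t)
    (hE : HasDerivAt (fun u => u ^ 3 * deriv Y u) (-(t ^ 3 * g t)) t) :
    HasDerivAt (VMu k ψ Y) (VMu' k ψ μ Y g t) t := by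
  have h := (hE.mul (wMu_hasDeriv k ψ ht)).sub (hYd.mul (W1Mu_hasDeriv k ψ ht))
  refine h.congr_deriv ?_
  rw [VMu', ← hk2]
  field_simp
  ring

/-- The core μ-side Sturm–Picone contradiction. -/
lemma mu_contra (μ : ℝ) (hμ : 0 < μ) (Y g : ℝ → ℝ) (t₀ : ℝ) (ht₀ : 0 ≤ t₀)
    (hYd : ∀ t > (0:ℝ), HasDerivAt Y (deriv Y t) t)
    (hE : ∀ t > (0:ℝ), HasDerivAt (fun u => u ^ 3 * deriv Y u) (-(t ^ 3 * g t)) t)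
    (hg : ∀ t > (0:ℝ), 0 < Y t → μ * Y t ≤ g t)
    (hpos : ∀ t ∈ Ioo t₀ (t₀ + 7.6635 / Real.sqrt μ), 0 < Y t)
    (hzero : 0 < t₀ → Y t₀ = 0)
    (hlim : t₀ = 0 →
      Tendsto (deriv Y) (𝓝[>] 0) (𝓝 0) ∧ Tendsto Y (𝓝[>] 0) (𝓝 (Y 0))) :
    False := by
  set k := Real.sqrt μ with hkdef
  have hk : 0 < k := Real.sqrt_pos.mpr hμ
  have hk2 : k ^ 2 = μ := Real.sq_sqrt hμ.le
  set x₀ := k * t₀ with hx₀def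
  have hx₀ : 0 ≤ x₀ := by positivity
  obtain ⟨x₂, hx₂1, hx₂2, hN0, hN2, hNpos, hsinneg⟩ := NN_props x₀ hx₀
  set ψ := Real.arctan x₀ - x₀ with hψdef
  set t₂ := x₂ / k with ht₂def
  have hkt₂ : k * t₂ = x₂ := by rw [ht₂def]; field_simp
  have ht₂ : t₀ < t₂ := by
    rw [ht₂def, lt_div_iff₀ hk]; nlinarith
  have ht₂pos : 0 < t₂ := lt_of_le_of_lt ht₀ ht₂
  have hΔ : t₂ < t₀ + 7.6635 / k := by
    have hπ : Real.pi < 3.15 := Real.pi_lt_d2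
    have h1 : x₂ < x₀ + 7.6635 := by nlinarith
    have h2 : t₂ < (x₀ + 7.6635) / k := by
      rw [ht₂def]
      exact div_lt_div_of_pos_right h1 hk
    have h3 : (x₀ + 7.6635) / k = t₀ + 7.6635 / k := by
      rw [hx₀def, add_div, mul_div_cancel_left₀ _ hk.ne']
    rw [← h3]; exact h2
  have hVd : ∀ t ∈ Ioc t₀ t₂, HasDerivAt (VMu k ψ Y) (VMu' k ψ μ Y g t) t := by
    intro t ht
    have htpos : 0 < t := lt_of_le_of_lt ht₀ ht.1
    exact VMu_hasDeriv hk2 Y g htpos (hYd t htpos) (hE t htpos)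
  have hwnonneg : ∀ t ∈ Ioc t₀ t₂, 0 ≤ wMu k ψ t := by
    intro t ht
    have htpos : 0 < t := lt_of_le_of_lt ht₀ ht.1
    rcases eq_or_lt_of_le ht.2 with h | h
    · have hkt : k * t = x₂ := by rw [h]; exact hkt₂
      rw [wMu, hkt, hN2, zero_div]
    · have hmem : k * t ∈ Ioo x₀ x₂ := by
        constructor
        · rw [hx₀def]; exact (mul_lt_mul_iff_right₀ hk).mpr ht.1
        · rw [← hkt₂]; exact (mul_lt_mul_iff_right₀ hk).mpr h
      have hN := hNpos _ hmem
      have hsq : 0 < Real.sqrt t := Real.sqrt_pos.mpr htpos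
      rw [wMu]; positivity
  have hYpos : ∀ t ∈ Ioc t₀ t₂, 0 < Y t := by
    intro t ht
    exact hpos t ⟨ht.1, lt_of_le_of_lt ht.2 hΔ⟩
  have hV'0 : ∀ t ∈ Ioc t₀ t₂, VMu' k ψ μ Y g t ≤ 0 := by
    intro t ht
    have htpos : 0 < t := lt_of_le_of_lt ht₀ ht.1
    have h1 : μ * Y t - g t ≤ 0 := by linarith [hg t htpos (hYpos t ht)]
    have h2 := hwnonneg t ht
    have h3 := (hYpos t ht).le
    have ht3 : (0:ℝ) ≤ t ^ 3 := by positivity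
    have p1 : t ^ 3 * wMu k ψ t * (μ * Y t - g t) ≤ 0 :=
      mul_nonpos_iff.mpr (Or.inl ⟨mul_nonneg ht3 h2, h1⟩)
    have p2 : 0 ≤ 5 / 4 * t * Y t * wMu k ψ t :=
      mul_nonneg (mul_nonneg (mul_nonneg (by norm_num) htpos.le) h3) h2
    rw [VMu']
    linarith
  have hlimV : Tendsto (VMu k ψ Y) (𝓝[>] t₀) (𝓝 0) := by
    rcases eq_or_lt_of_le ht₀ with h0 | h0
    · -- t₀ = 0 : squeeze
      have h00 : t₀ = 0 := h0.symm
      obtain ⟨hd0, hY0⟩ := hlim h00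
      have hx₀0 : x₀ = 0 := by rw [hx₀def, h00, mul_zero]
      have hψ0 : ψ = 0 := by rw [hψdef, hx₀0, Real.arctan_zero, sub_zero]
      have hbound : ∀ t ∈ Ioi (0:ℝ), |VMu k ψ Y t| ≤
          |deriv Y t| * (2 * k * t * Real.sqrt t)
            + |Y t| * (k ^ 2 * t * Real.sqrt t + 5 * k * Real.sqrt t) := by
        intro t htpos
        have htpos : (0:ℝ) < t := htpos
        have hsq : 0 < Real.sqrt t := Real.sqrt_pos.mpr htpos
        have hsq2 : Real.sqrt t ^ 2 = t := Real.sq_sqrt htpos.le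
        have hNb : |NN ψ (k * t)| ≤ 2 * (k * t) := by
          rw [hψ0]; exact abs_NN_le (by positivity)
        have hNbn : 0 ≤ |NN ψ (k * t)| := abs_nonneg _
        have hterm1 : |t ^ 3 * deriv Y t * wMu k ψ t|
            ≤ |deriv Y t| * (2 * k * t * Real.sqrt t) := by
          have ht32 : t ^ 3 = t ^ 2 * Real.sqrt t * Real.sqrt t := by nlinarith
          have heq : t ^ 3 * deriv Y t * wMu k ψ t
              = deriv Y t * (NN ψ (k * t) * Real.sqrt t) := by
            rw [wMu, ht32]
            field_simp
          rw [heq, abs_mul]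
          apply mul_le_mul_of_nonneg_left _ (abs_nonneg _)
          rw [abs_mul, abs_of_nonneg hsq.le]
          nlinarith
        have hterm2 : |Y t * W1Mu k ψ t|
            ≤ |Y t| * (k ^ 2 * t * Real.sqrt t + 5 * k * Real.sqrt t) := by
          rw [abs_mul]
          apply mul_le_mul_of_nonneg_left _ (abs_nonneg _)
          rw [W1Mu]
          have h5 : |5 / 2 * NN ψ (k * t) / Real.sqrt t| ≤ 5 * k * Real.sqrt t := by
            rw [abs_div, abs_mul, abs_of_nonneg hsq.le]
            have h52 : |(5:ℝ)/2| = 5/2 := by norm_num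
            rw [h52, div_le_iff₀ hsq]
            nlinarith
          have h6 : |k ^ 2 * t * Real.sqrt t * Real.sin (k * t + ψ)|
              ≤ k ^ 2 * t * Real.sqrt t := by
            rw [abs_mul]
            have hp : |k ^ 2 * t * Real.sqrt t| = k ^ 2 * t * Real.sqrt t := by
              rw [abs_of_nonneg]; positivity
            rw [hp]
            have hkk : (0:ℝ) ≤ k ^ 2 * t * Real.sqrt t := by positivity
            nlinarith [Real.abs_sin_le_one (k * t + ψ)]
          calc |k ^ 2 * t * Real.sqrt t * Real.sin (k * t + ψ)
                - 5 / 2 * NN ψ (k * t) / Real.sqrt t|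
              ≤ |k ^ 2 * t * Real.sqrt t * Real.sin (k * t + ψ)|
                + |5 / 2 * NN ψ (k * t) / Real.sqrt t| := abs_sub _ _
            _ ≤ k ^ 2 * t * Real.sqrt t + 5 * k * Real.sqrt t := by linarith
        calc |VMu k ψ Y t| ≤ |t ^ 3 * deriv Y t * wMu k ψ t| + |Y t * W1Mu k ψ t| :=
              abs_sub _ _
          _ ≤ _ := by linarith
      have hBlim : Tendsto (fun t => |deriv Y t| * (2 * k * t * Real.sqrt t)
          + |Y t| * (k ^ 2 * t * Real.sqrt t + 5 * k * Real.sqrt t)) (𝓝[>] (0:ℝ)) (𝓝 0) := by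
        have hc1 : Tendsto (fun t : ℝ => 2 * k * t * Real.sqrt t) (𝓝[>] (0:ℝ)) (𝓝 0) := by
          apply tendsto_nhdsWithin_of_tendsto_nhds
          have hcont : ContinuousAt (fun t : ℝ => 2 * k * t * Real.sqrt t) 0 := by fun_prop
          simpa using hcont.tendsto
        have hc2 : Tendsto (fun t : ℝ => k ^ 2 * t * Real.sqrt t + 5 * k * Real.sqrt t)
            (𝓝[>] (0:ℝ)) (𝓝 0) := by
          apply tendsto_nhdsWithin_of_tendsto_nhds
          have hcont : ContinuousAt (fun t : ℝ => k ^ 2 * t * Real.sqrt t + 5 * k * Real.sqrt t) 0 := by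
            fun_prop
          have := hcont.tendsto
          simpa [Real.sqrt_zero] using this
        have habs1 : Tendsto (fun t => |deriv Y t|) (𝓝[>] (0:ℝ)) (𝓝 0) := by
          simpa using hd0.abs
        have habs2 : Tendsto (fun t => |Y t|) (𝓝[>] (0:ℝ)) (𝓝 |Y 0|) := hY0.abs
        have := (habs1.mul hc1).add (habs2.mul hc2)
        simpa using this
      rw [h00]
      apply squeeze_zero_norm' _ hBlim
      filter_upwards [self_mem_nhdsWithin] with t ht
      simpa [Real.norm_eq_abs] using hbound t ht
    · -- t₀ > 0 : V continuous at t₀ with value 0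
      have hVt₀ : VMu k ψ Y t₀ = 0 := by
        have hw0 : wMu k ψ t₀ = 0 := by
          rw [wMu, ← hx₀def, hN0, zero_div]
        have hW0 : W1Mu k ψ t₀ = k ^ 2 * t₀ * Real.sqrt t₀ * Real.sin (k * t₀ + ψ) := by
          rw [W1Mu, ← hx₀def, hN0]
          ring
        rw [VMu, hw0, hzero h0, mul_zero, zero_mul, sub_zero]
      have hcont : ContinuousAt (VMu k ψ Y) t₀ :=
        (VMu_hasDeriv hk2 Y g h0 (hYd t₀ h0) (hE t₀ h0)).continuousAt
      rw [← hVt₀]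
      exact hcont.continuousWithinAt.tendsto
  have hVq := Vq_nonpos ht₂ hVd hV'0 hlimV
  -- but V t₂ > 0
  have hw2 : wMu k ψ t₂ = 0 := by rw [wMu, hkt₂, hN2, zero_div]
  have hsq2 : 0 < Real.sqrt t₂ := Real.sqrt_pos.mpr ht₂pos
  have hW12 : W1Mu k ψ t₂ < 0 := by
    rw [W1Mu, hkt₂, hN2]
    have h52 : (5:ℝ) / 2 * 0 / Real.sqrt t₂ = 0 := by ring
    rw [h52, sub_zero]
    have hkk : 0 < k ^ 2 * t₂ * Real.sqrt t₂ := by positivity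
    exact mul_neg_of_pos_of_neg hkk hsinneg
  have hY2 : 0 < Y t₂ := hYpos t₂ ⟨ht₂, le_refl t₂⟩
  have hpos2 : 0 < VMu k ψ Y t₂ := by
    rw [VMu, hw2, mul_zero, zero_sub]
    exact neg_pos.mpr (mul_neg_of_pos_of_neg hY2 hW12)
  linarith

def VL (k p : ℝ) (Y : ℝ → ℝ) (t : ℝ) : ℝ :=
  t ^ 3 * deriv Y t * wL k p t - Y t * W1L k p t
def VL' (k p L : ℝ) (Y g : ℝ → ℝ) (t : ℝ) : ℝ :=
  t ^ 3 * wL k p t * (L * Y t - g t) + 3 / 4 * t * Y t * wL k p t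

lemma VL_hasDeriv {k L : ℝ} (p : ℝ) (hk2 : k ^ 2 = L) (Y g : ℝ → ℝ) {t : ℝ} (ht : 0 < t)
    (hYd : HasDerivAt Y (deriv Y t) t)
    (hE : HasDerivAt (fun u => u ^ 3 * deriv Y u) (-(t ^ 3 * g t)) t) :
    HasDerivAt (VL k p Y) (VL' k p L Y g t) t := by
  have h := (hE.mul (wL_hasDeriv k p ht)).sub (hYd.mul (W1L_hasDeriv k p ht))
  refine h.congr_deriv ?_
  rw [VL', ← hk2]
  field_simp
  ring

/-- Derivative at a right zero of a positive function is nonpositive. -/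
lemma deriv_nonpos_at_right_zero {Y : ℝ → ℝ} {p q : ℝ} (hpq : p < q)
    (hd : HasDerivAt Y (deriv Y q) q)
    (hpos : ∀ t ∈ Ioo p q, 0 < Y t) (hYq : Y q = 0) : deriv Y q ≤ 0 := by
  have hslope : Tendsto (slope Y q) (𝓝[<] q) (𝓝 (deriv Y q)) := by
    have h := hasDerivAt_iff_tendsto_slope.mp hd
    exact h.mono_left (nhdsWithin_mono q (fun x hx => ne_of_lt hx))
  apply le_of_tendsto hslope
  filter_upwards [Ioo_mem_nhdsLT_of_mem ⟨hpq, le_refl q⟩] with t ht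
  have h1 : 0 < Y t := hpos t ht
  have h2 : t - q < 0 := sub_neg.mpr ht.2
  rw [slope_def_field]
  have : (Y t - Y q) / (t - q) ≤ 0 := by
    rw [hYq, sub_zero]
    exact (div_neg_of_pos_of_neg h1 h2).le
  simpa [div_eq_inv_mul] using this

/-- The L-side Sturm comparison: two zeros bounding a positivity interval are
more than `π/√L` apart. -/
lemma L_contra (L : ℝ) (hL : 0 < L) (Y g : ℝ → ℝ) (p q : ℝ) (hp : 0 < p) (hpq : p < q)
    (hqp : q - p ≤ Real.pi / Real.sqrt L)
    (hYd : ∀ t > (0:ℝ), HasDerivAt Y (deriv Y t) t)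
    (hE : ∀ t > (0:ℝ), HasDerivAt (fun u => u ^ 3 * deriv Y u) (-(t ^ 3 * g t)) t)
    (hgle : ∀ t > (0:ℝ), 0 < Y t → g t ≤ L * Y t)
    (hpos : ∀ t ∈ Ioo p q, 0 < Y t)
    (hYp : Y p = 0) (hYq : Y q = 0) : False := by
  set k := Real.sqrt L with hkdef
  have hk : 0 < k := Real.sqrt_pos.mpr hL
  have hk2 : k ^ 2 = L := Real.sq_sqrt hL.le
  have hqπ : k * (q - p) ≤ Real.pi := by
    rw [mul_comm]
    exact (le_div_iff₀ hk).mp hqp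
  have hwpos : ∀ t ∈ Ioo p q, 0 < wL k p t := by
    intro t ht
    have htpos : 0 < t := hp.trans ht.1
    have hsq : 0 < Real.sqrt t := Real.sqrt_pos.mpr htpos
    have harg1 : 0 < k * (t - p) := by
      have := ht.1
      have h2 : 0 < t - p := by linarith
      positivity
    have harg2 : k * (t - p) < Real.pi := by
      have h2 : k * (t - p) < k * (q - p) := by
        apply mul_lt_mul_of_pos_left _ hk
        linarith [ht.2]
      linarith
    have hsin := Real.sin_pos_of_pos_of_lt_pi harg1 harg2
    rw [wL]
    positivity
  have hVd : ∀ t ∈ Icc p q, HasDerivAt (VL k p Y) (VL' k p L Y g t) t := by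
    intro t ht
    have htpos : 0 < t := lt_of_lt_of_le hp ht.1
    exact VL_hasDeriv p hk2 Y g htpos (hYd t htpos) (hE t htpos)
  have hd0 : ∀ t ∈ Ioo p q, 0 < VL' k p L Y g t := by
    intro t ht
    have htpos : 0 < t := hp.trans ht.1
    have hY := hpos t ht
    have hw := hwpos t ht
    have h1 : 0 ≤ L * Y t - g t := by linarith [hgle t htpos hY]
    have p1 : 0 ≤ t ^ 3 * wL k p t * (L * Y t - g t) := by positivity
    have p2 : 0 < 3 / 4 * t * Y t * wL k p t := by positivity
    rw [VL']
    linarith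
  have hVp : VL k p Y p = 0 := by
    have hw0 : wL k p p = 0 := by
      rw [wL, sub_self, mul_zero, Real.sin_zero, zero_div]
    rw [VL, hw0, mul_zero, hYp, zero_mul, sub_zero]
  have hVq := Vq_pos hpq (fun t ht => (hVd t ht).continuousAt.continuousWithinAt)
    (fun t ht => hVd t (Ioo_subset_Icc_self ht)) hd0 hVp
  -- but VL q ≤ 0
  have hqpos : 0 < q := hp.trans hpq
  have hwq : 0 ≤ wL k p q := by
    have hsq : 0 < Real.sqrt q := Real.sqrt_pos.mpr hqpos
    have hsin : 0 ≤ Real.sin (k * (q - p)) := by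
      apply Real.sin_nonneg_of_nonneg_of_le_pi _ hqπ
      have : 0 < q - p := by linarith
      positivity
    rw [wL]
    positivity
  have hderiv : deriv Y q ≤ 0 :=
    deriv_nonpos_at_right_zero hpq (hYd q hqpos) hpos hYq
  have : VL k p Y q ≤ 0 := by
    rw [VL, hYq, zero_mul, sub_zero]
    apply mul_nonpos_iff.mpr
    apply Or.inr
    constructor
    · apply mul_nonpos_iff.mpr
      exact Or.inl ⟨by positivity, hderiv⟩
    · exact hwq
  linarith

/-- Backward uniqueness: if the trajectory reaches the equilibrium with zero velocity
at time `b`, it was there at any earlier positive time `δ`. -/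
lemma backward_unique (L xstar : ℝ) (hL0 : 0 ≤ L) (f : ℝ → ℝ)
    (hlip : ∀ x y : ℝ, |deriv f x - deriv f y| ≤ L * |x - y|)
    (hstar : deriv f xstar = 0)
    (X : ℝ → ℝ) (δ b : ℝ) (hδ : 0 < δ) (hδb : δ ≤ b)
    (hX1 : ∀ t > (0:ℝ), HasDerivAt X (deriv X t) t)
    (hX2 : ∀ t > (0:ℝ), HasDerivAt (deriv X) (deriv (deriv X) t) t)
    (hode : ∀ t > (0:ℝ), deriv (deriv X) t + 3 / t * deriv X t + deriv f (X t) = 0)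
    (hXb : X b = xstar) (hX'b : deriv X b = 0) :
    X δ = xstar := by
  set v : ℝ → ℝ × ℝ → ℝ × ℝ :=
    fun t p => (p.2, -(3 / max δ t) * p.2 - deriv f p.1) with hvdef
  set K : NNReal := (1 + 3 / δ + L).toNNReal with hKdef
  have hKc : (K : ℝ) = 1 + 3 / δ + L := by
    rw [hKdef, Real.coe_toNNReal]
    positivity
  have hv : ∀ t, LipschitzOnWith K (v t) (univ : Set (ℝ × ℝ)) := by
    intro t
    apply LipschitzOnWith.of_dist_le_mul
    intro p _ q _
    rw [Prod.dist_eq, hvdef]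
    dsimp only
    have hm : δ ≤ max δ t := le_max_left δ t
    have hmpos : 0 < max δ t := lt_of_lt_of_le hδ hm
    have h3m : 3 / max δ t ≤ 3 / δ := by
      apply div_le_div_of_nonneg_left (by norm_num) hδ hm
    have h3mpos : 0 ≤ 3 / max δ t := by positivity
    have hd1 : dist p.2 q.2 ≤ dist p q := by
      rw [Prod.dist_eq]; exact le_max_right _ _
    have hd0 : dist p.1 q.1 ≤ dist p q := by
      rw [Prod.dist_eq]; exact le_max_left _ _
    have hdnn : 0 ≤ dist p q := dist_nonneg
    apply max_le
    · calc dist p.2 q.2 ≤ dist p q := hd1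
        _ ≤ K * dist p q := by nlinarith [hKc, div_nonneg (by norm_num : (0:ℝ) ≤ 3) hδ.le]
    · rw [Real.dist_eq]
      have hsplit : |(-(3 / max δ t) * p.2 - deriv f p.1) - (-(3 / max δ t) * q.2 - deriv f q.1)|
          ≤ 3 / max δ t * |p.2 - q.2| + |deriv f p.1 - deriv f q.1| := by
        have h := abs_sub (-(3 / max δ t) * p.2 - -(3 / max δ t) * q.2)
          (deriv f p.1 - deriv f q.1)
        calc |(-(3 / max δ t) * p.2 - deriv f p.1) - (-(3 / max δ t) * q.2 - deriv f q.1)|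
            = |(-(3 / max δ t) * p.2 - -(3 / max δ t) * q.2) - (deriv f p.1 - deriv f q.1)| := by
              ring_nf
          _ ≤ |(-(3 / max δ t) * p.2 - -(3 / max δ t) * q.2)| + |deriv f p.1 - deriv f q.1| :=
              abs_sub _ _
          _ = 3 / max δ t * |p.2 - q.2| + |deriv f p.1 - deriv f q.1| := by
              have harw : -(3 / max δ t) * p.2 - -(3 / max δ t) * q.2
                  = -(3 / max δ t * (p.2 - q.2)) := by ring
              rw [harw, abs_neg, abs_mul, abs_of_nonneg h3mpos]
      have habs2 : dist p.2 q.2 = |p.2 - q.2| := Real.dist_eq _ _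
      have habs1 : dist p.1 q.1 = |p.1 - q.1| := Real.dist_eq _ _
      have hb2 : |p.2 - q.2| ≤ dist p q := by rw [← habs2]; exact hd1
      have hb1 : |p.1 - q.1| ≤ dist p q := by rw [← habs1]; exact hd0
      calc |(-(3 / max δ t) * p.2 - deriv f p.1) - (-(3 / max δ t) * q.2 - deriv f q.1)|
          ≤ 3 / max δ t * |p.2 - q.2| + |deriv f p.1 - deriv f q.1| := hsplit
        _ ≤ ↑K * dist p q := by
          have hlp := hlip p.1 q.1
          have m1 : 3 / max δ t * |p.2 - q.2| ≤ 3 / max δ t * dist p q :=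
            mul_le_mul_of_nonneg_left hb2 h3mpos
          have m2 : 3 / max δ t * dist p q ≤ 3 / δ * dist p q :=
            mul_le_mul_of_nonneg_right h3m hdnn
          have m3 : L * |p.1 - q.1| ≤ L * dist p q := mul_le_mul_of_nonneg_left hb1 hL0
          rw [hKc]
          nlinarith
  have hpair : ∀ t ∈ Ioc δ b, HasDerivWithinAt (fun t => (X t, deriv X t))
      (v t (X t, deriv X t)) (Iic t) t := by
    intro t ht
    have htpos : 0 < t := hδ.trans ht.1
    have h := (hX1 t htpos).prodMk (hX2 t htpos)
    have hveq : v t (X t, deriv X t) = (deriv X t, deriv (deriv X) t) := by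
      rw [hvdef]
      dsimp only
      have hmax : max δ t = t := max_eq_right ht.1.le
      rw [hmax]
      have := hode t htpos
      have h2 : -(3 / t) * deriv X t - deriv f (X t) = deriv (deriv X) t := by linarith
      rw [h2]
    rw [hveq]
    exact h.hasDerivWithinAt
  have hconst : ∀ t ∈ Ioc δ b, HasDerivWithinAt (fun _ : ℝ => ((xstar : ℝ), (0 : ℝ)))
      (v t (xstar, 0)) (Iic t) t := by
    intro t ht
    have hveq : v t ((xstar : ℝ), (0:ℝ)) = (0, 0) := by
      rw [hvdef]
      dsimp only
      rw [hstar]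
      simp
    rw [hveq]
    exact (hasDerivAt_const t _).hasDerivWithinAt
  have hcontX : ContinuousOn (fun t => (X t, deriv X t)) (Icc δ b) := by
    intro t ht
    have htpos : 0 < t := lt_of_lt_of_le hδ ht.1
    exact (((hX1 t htpos).continuousAt).prodMk ((hX2 t htpos).continuousAt)).continuousWithinAt
  have hkey := ODE_solution_unique_of_mem_Icc_left (fun t _ => hv t) hcontX hpair
    (fun t _ => mem_univ _) (continuousOn_const) hconst (fun t _ => mem_univ _)
    (by simp only []; rw [Prod.mk.injEq]; exact ⟨hXb, hX'b⟩ : (fun t => (X t, deriv X t)) b = ((xstar : ℝ), (0:ℝ)))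
  have := hkey (mem_Icc.mpr ⟨le_refl δ, hδb⟩)
  exact congrArg Prod.fst this


lemma sign_dichotomy {X : ℝ → ℝ} {xstar p q : ℝ} (hp : 0 ≤ p)
    (hc : ContinuousOn X (Ici 0))
    (hne : ∀ t ∈ Ioo p q, X t ≠ xstar) :
    (∀ t ∈ Ioo p q, xstar < X t) ∨ (∀ t ∈ Ioo p q, X t < xstar) := by
  by_contra hcon
  push_neg at hcon
  obtain ⟨⟨t1, ht1, h1⟩, ⟨t2, ht2, h2⟩⟩ := hcon
  have h1' : X t1 < xstar := lt_of_le_of_ne h1 (hne t1 ht1)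
  have h2' : xstar < X t2 := lt_of_le_of_ne h2 (Ne.symm (hne t2 ht2))
  rcases lt_trichotomy t1 t2 with hlt | heq | hgt
  · have hsub : Icc t1 t2 ⊆ Ioo p q := fun z hz =>
      ⟨lt_of_lt_of_le ht1.1 hz.1, lt_of_le_of_lt hz.2 ht2.2⟩
    have hcont : ContinuousOn X (Icc t1 t2) :=
      hc.mono (fun z hz => le_trans hp (le_of_lt (lt_of_le_of_lt (le_refl p) ((hsub hz).1))))
    obtain ⟨ζ, hζ, hXζ⟩ := intermediate_value_Icc hlt.le hcont ⟨h1'.le, h2'.le⟩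
    exact hne ζ (hsub hζ) hXζ
  · rw [heq] at h1'; linarith
  · have hsub : Icc t2 t1 ⊆ Ioo p q := fun z hz =>
      ⟨lt_of_lt_of_le ht2.1 hz.1, lt_of_le_of_lt hz.2 ht1.2⟩
    have hcont : ContinuousOn X (Icc t2 t1) :=
      hc.mono (fun z hz => le_trans hp (le_of_lt ((hsub hz).1)))
    obtain ⟨ζ, hζ, hXζ⟩ := intermediate_value_Icc' hgt.le hcont ⟨h1'.le, h2'.le⟩
    exact hne ζ (hsub hζ) hXζ

/-- Wrapper of `mu_contra` working directly with `X`, handling both signs. -/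
lemma mu_contra_X (μ : ℝ) (hμ : 0 < μ) (f X : ℝ → ℝ) (xstar : ℝ)
    (hXd1 : ∀ t > (0:ℝ), HasDerivAt X (deriv X t) t)
    (hEX : ∀ t > (0:ℝ), HasDerivAt (fun u => u ^ 3 * deriv X u) (-(t ^ 3 * deriv f (X t))) t)
    (hsm1 : ∀ z, xstar < z → μ * (z - xstar) ≤ deriv f z)
    (hsm2 : ∀ z, z < xstar → deriv f z ≤ μ * (z - xstar))
    (hX'lim : Tendsto (deriv X) (𝓝[>] 0) (𝓝 0))
    (hXlim0 : Tendsto X (𝓝[>] 0) (𝓝 (X 0)))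
    (t₀ : ℝ) (ht₀ : 0 ≤ t₀) (hzero : 0 < t₀ → X t₀ = xstar)
    (hsign : (∀ t ∈ Ioo t₀ (t₀ + 7.6635 / Real.sqrt μ), xstar < X t) ∨
             (∀ t ∈ Ioo t₀ (t₀ + 7.6635 / Real.sqrt μ), X t < xstar)) : False := by
  have hder1 : deriv (fun u => X u - xstar) = deriv X :=
    funext fun t => deriv_sub_const xstar
  have hder2 : deriv (fun u => xstar - X u) = fun t => -deriv X t :=
    funext fun t => deriv_const_sub xstar
  rcases hsign with hcase | hcase
  · refine mu_contra μ hμ (fun u => X u - xstar) (fun t => deriv f (X t)) t₀ ht₀ ?_ ?_ ?_ ?_ ?_ ?_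
    · intro t ht
      rw [hder1]
      exact (hXd1 t ht).sub_const xstar
    · intro t ht
      have hfn : (fun u => u ^ 3 * deriv (fun v => X v - xstar) u)
          = fun u => u ^ 3 * deriv X u := by rw [hder1]
      rw [hfn]
      exact hEX t ht
    · intro t ht hY
      have := hsm1 (X t) (by linarith)
      linarith
    · intro t htm
      exact sub_pos.mpr (hcase t htm)
    · intro h
      show X t₀ - xstar = 0
      rw [hzero h, sub_self]
    · intro h0
      constructor
      · rw [hder1]; exact hX'lim
      · simpa using hXlim0.sub tendsto_const_nhds
  · refine mu_contra μ hμ (fun u => xstar - X u) (fun t => -deriv f (X t)) t₀ ht₀ ?_ ?_ ?_ ?_ ?_ ?_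
    · intro t ht
      rw [hder2]
      exact (hXd1 t ht).const_sub xstar
    · intro t ht
      have hfn : (fun u => u ^ 3 * deriv (fun v => xstar - X v) u)
          = fun u => -(u ^ 3 * deriv X u) := by rw [hder2]; funext u; ring
      rw [hfn]
      have := (hEX t ht).neg
      exact this.congr_deriv (by ring)
    · intro t ht hY
      have := hsm2 (X t) (by linarith)
      linarith
    · intro t htm
      exact sub_pos.mpr (hcase t htm)
    · intro h
      show xstar - X t₀ = 0
      rw [hzero h, sub_self]
    · intro h0
      constructor
      · rw [hder2]
        simpa using hX'lim.neg
      · have := (tendsto_const_nhds (x := xstar) (f := 𝓝[>] (0:ℝ))).sub hXlim0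
        simpa using this


/-- Wrapper of `L_contra` working directly with `X`, handling both signs. -/
lemma L_contra_X (L : ℝ) (hL : 0 < L) (f X : ℝ → ℝ) (xstar : ℝ) (p q : ℝ)
    (hp : 0 < p) (hpq : p < q) (hqp : q - p ≤ Real.pi / Real.sqrt L)
    (hXd1 : ∀ t > (0:ℝ), HasDerivAt X (deriv X t) t)
    (hEX : ∀ t > (0:ℝ), HasDerivAt (fun u => u ^ 3 * deriv X u) (-(t ^ 3 * deriv f (X t))) t)
    (hub : ∀ z : ℝ, |deriv f z| ≤ L * |z - xstar|)
    (hXp : X p = xstar) (hXq : X q = xstar)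
    (hsign : (∀ t ∈ Ioo p q, xstar < X t) ∨ (∀ t ∈ Ioo p q, X t < xstar)) : False := by
  have hder1 : deriv (fun u => X u - xstar) = deriv X :=
    funext fun t => deriv_sub_const xstar
  have hder2 : deriv (fun u => xstar - X u) = fun t => -deriv X t :=
    funext fun t => deriv_const_sub xstar
  rcases hsign with hcase | hcase
  · refine L_contra L hL (fun u => X u - xstar) (fun t => deriv f (X t)) p q hp hpq hqp
      ?_ ?_ ?_ ?_ ?_ ?_
    · intro t ht
      rw [hder1]
      exact (hXd1 t ht).sub_const xstar
    · intro t ht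
      have hfn : (fun u => u ^ 3 * deriv (fun v => X v - xstar) u)
          = fun u => u ^ 3 * deriv X u := by rw [hder1]
      rw [hfn]
      exact hEX t ht
    · intro t ht hY
      have h1 := hub (X t)
      have h2 : |X t - xstar| = X t - xstar := abs_of_pos hY
      rw [h2] at h1
      have h3 : deriv f (X t) ≤ |deriv f (X t)| := le_abs_self _
      linarith
    · intro t htm
      exact sub_pos.mpr (hcase t htm)
    · show X p - xstar = 0
      rw [hXp, sub_self]
    · show X q - xstar = 0
      rw [hXq, sub_self]
  · refine L_contra L hL (fun u => xstar - X u) (fun t => -deriv f (X t)) p q hp hpq hqp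
      ?_ ?_ ?_ ?_ ?_ ?_
    · intro t ht
      rw [hder2]
      exact (hXd1 t ht).const_sub xstar
    · intro t ht
      have hfn : (fun u => u ^ 3 * deriv (fun v => xstar - X v) u)
          = fun u => -(u ^ 3 * deriv X u) := by rw [hder2]; funext u; ring
      rw [hfn]
      exact (hEX t ht).neg.congr_deriv (by ring)
    · intro t ht hY
      have h1 := hub (X t)
      have h2 : |X t - xstar| = -(X t - xstar) := abs_of_neg (by linarith)
      rw [h2] at h1
      have h3 : -(deriv f (X t)) ≤ |deriv f (X t)| := neg_le_abs _
      linarith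
    · intro t htm
      exact sub_pos.mpr (hcase t htm)
    · show xstar - X p = 0
      rw [hXp, sub_self]
    · show xstar - X q = 0
      rw [hXq, sub_self]


/-- **Theorem 4 (oscillation of strongly convex `f`).**  The roots of `X(t) - x⋆` appear with
gaps at most `7.6635/√μ` and any three consecutive roots span more than `π/√L`. -/
theorem nesterov_ode_oscillation (μ L : ℝ) (hμ : 0 < μ) (hμL : μ ≤ L)
    (f : ℝ → ℝ) (hf : MemS1 μ L f) (xstar : ℝ) (hmin : IsMinOn f Set.univ xstar)
    (x0 : ℝ) (hx0 : x0 ≠ xstar) (X : ℝ → ℝ) (hX : NesterovSol1 f x0 X) :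
    (∃ t ∈ Set.Ioo (0:ℝ) (7.6635 / Real.sqrt μ), X t = xstar) ∧
    (∀ t > (0:ℝ), X t = xstar →
      ∃ t' ∈ Set.Ioo t (t + 7.6635 / Real.sqrt μ), X t' = xstar) ∧
    (∀ a b c : ℝ, 0 < a → a < b → b < c →
      X a = xstar → X b = xstar → X c = xstar → Real.pi / Real.sqrt L < c - a) := by
  obtain ⟨hconv, hC1f, hlip, hsconv⟩ := hf
  obtain ⟨hX0, hC1, hC2, hdw0, hode⟩ := hX
  have hL : 0 < L := lt_of_lt_of_le hμ hμL
  have hfd : Differentiable ℝ f := hC1f.differentiable one_ne_zero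
  have hstar : deriv f xstar = 0 := (hmin.isLocalMin Filter.univ_mem).deriv_eq_zero
  have hgderiv : ∀ x : ℝ, deriv (fun x => f x - μ / 2 * x ^ 2) x = deriv f x - μ * x := by
    intro x
    have h2 : HasDerivAt (fun x : ℝ => μ / 2 * x ^ 2) (μ * x) x := by
      have h := (hasDerivAt_pow 2 x).const_mul (μ / 2)
      refine h.congr_deriv ?_
      push_cast
      ring
    exact ((hfd x).hasDerivAt.sub h2).deriv
  have hgd : ∀ x ∈ (univ : Set ℝ), DifferentiableAt ℝ (fun x => f x - μ / 2 * x ^ 2) x :=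
    fun x _ => (hfd x).sub ((differentiableAt_pow 2).const_mul _)
  have hmono := hsconv.monotoneOn_deriv hgd
  have hsm1 : ∀ z, xstar < z → μ * (z - xstar) ≤ deriv f z := by
    intro z hz
    have h := hmono (mem_univ xstar) (mem_univ z) hz.le
    rw [hgderiv, hgderiv, hstar] at h
    linarith
  have hsm2 : ∀ z, z < xstar → deriv f z ≤ μ * (z - xstar) := by
    intro z hz
    have h := hmono (mem_univ z) (mem_univ xstar) hz.le
    rw [hgderiv, hgderiv, hstar] at h
    linarith
  have hub : ∀ z : ℝ, |deriv f z| ≤ L * |z - xstar| := by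
    intro z
    have h := hlip z xstar
    rwa [hstar, sub_zero] at h
  have hXd1 : ∀ t > (0:ℝ), HasDerivAt X (deriv X t) t := by
    intro t ht
    exact ((hC2.differentiableOn (by norm_num)).differentiableAt
      (isOpen_Ioi.mem_nhds ht)).hasDerivAt
  have hXdOn : DifferentiableOn ℝ (deriv X) (Ioi 0) := by
    have h1 : ContDiffOn ℝ 1 (deriv X) (Ioi 0) := hC2.deriv_of_isOpen isOpen_Ioi (by norm_num)
    exact h1.differentiableOn one_ne_zero
  have hXd2 : ∀ t > (0:ℝ), HasDerivAt (deriv X) (deriv (deriv X) t) t := by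
    intro t ht
    exact (hXdOn.differentiableAt (isOpen_Ioi.mem_nhds ht)).hasDerivAt
  have hXcont : ContinuousOn X (Ici 0) := hC1.continuousOn
  have hX'lim : Tendsto (deriv X) (𝓝[>] 0) (𝓝 0) := by
    have h1 : ContinuousOn (derivWithin X (Ici 0)) (Ici 0) :=
      hC1.continuousOn_derivWithin (uniqueDiffOn_Ici 0) le_rfl
    have h2 : Tendsto (derivWithin X (Ici 0)) (𝓝[Ici 0] 0)
        (𝓝 (derivWithin X (Ici 0) 0)) := h1 0 self_mem_Ici
    rw [hdw0] at h2
    have h3 : Tendsto (derivWithin X (Ici 0)) (𝓝[>] 0) (𝓝 0) :=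
      h2.mono_left (nhdsWithin_mono 0 Ioi_subset_Ici_self)
    apply Filter.Tendsto.congr' _ h3
    filter_upwards [self_mem_nhdsWithin] with t ht
    exact derivWithin_of_mem_nhds (mem_of_superset (isOpen_Ioi.mem_nhds ht) Ioi_subset_Ici_self)
  have hXlim0 : Tendsto X (𝓝[>] 0) (𝓝 (X 0)) := by
    have h : Tendsto X (𝓝[Ici 0] 0) (𝓝 (X 0)) := hXcont 0 self_mem_Ici
    exact h.mono_left (nhdsWithin_mono 0 Ioi_subset_Ici_self)
  have hEX : ∀ t > (0:ℝ), HasDerivAt (fun u => u ^ 3 * deriv X u)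
      (-(t ^ 3 * deriv f (X t))) t := by
    intro t ht
    have h := (hasDerivAt_pow 3 t).mul (hXd2 t ht)
    refine h.congr_deriv ?_
    have hx2 := hode t ht
    have htne : t ≠ 0 := ne_of_gt ht
    have hode2 : deriv (deriv X) t = -(3 / t * deriv X t) - deriv f (X t) := by linarith
    rw [hode2]
    push_cast
    field_simp
    ring
  refine ⟨?_, ?_, ?_⟩
  · -- part (i)
    by_contra hno
    push_neg at hno
    have hne : ∀ t ∈ Ioo (0:ℝ) (7.6635 / Real.sqrt μ), X t ≠ xstar := fun t ht => hno t ht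
    have hsign := sign_dichotomy (le_refl (0:ℝ)) hXcont hne
    apply mu_contra_X μ hμ f X xstar hXd1 hEX hsm1 hsm2 hX'lim hXlim0 0 le_rfl
      (fun h => absurd h (lt_irrefl 0))
    rw [zero_add]
    exact hsign
  · -- part (ii)
    intro t ht hXt
    by_contra hno
    push_neg at hno
    have hne : ∀ u ∈ Ioo t (t + 7.6635 / Real.sqrt μ), X u ≠ xstar := fun u hu => hno u hu
    have hsign := sign_dichotomy (le_of_lt ht) hXcont hne
    exact mu_contra_X μ hμ f X xstar hXd1 hEX hsm1 hsm2 hX'lim hXlim0 t ht.le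
      (fun _ => hXt) hsign
  · -- part (iii)
    intro a b c ha hab hbc hXa hXb hXc
    by_contra hno
    push_neg at hno
    by_cases hdeg : ∀ u ∈ Ioo a c, X u = xstar
    · -- degenerate case: backward uniqueness
      have hXderiv_b : deriv X b = 0 := by
        have hev : X =ᶠ[𝓝 b] fun _ => xstar := by
          filter_upwards [Ioo_mem_nhds hab hbc] with u hu
          exact hdeg u hu
        rw [hev.deriv_eq]
        simp
      have hx0ne : X 0 ≠ xstar := by rw [hX0]; exact hx0
      have hb0 : 0 < b := lt_trans ha hab
      have hev2 : ∀ᶠ u in 𝓝[>] (0:ℝ), (X u ≠ xstar ∧ u < b) ∧ u ∈ Ioi (0:ℝ) := by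
        refine Filter.Eventually.and (Filter.Eventually.and ?_ ?_) self_mem_nhdsWithin
        · have hmem : {y : ℝ | y ≠ xstar} ∈ 𝓝 (X 0) := isOpen_ne.mem_nhds hx0ne
          exact hXlim0.eventually (eventually_of_mem hmem (fun y hy => hy))
        · have hIoo : Ioo (0:ℝ) b ∈ 𝓝[>] (0:ℝ) :=
            Ioo_mem_nhdsGT_of_mem ⟨le_refl 0, hb0⟩
          filter_upwards [hIoo] with u hu
          exact hu.2
      obtain ⟨δ, ⟨hδne, hδb⟩, hδ0⟩ := hev2.exists
      have hXδ := backward_unique L xstar hL.le f hlip hstar X δ b hδ0 hδb.le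
        hXd1 hXd2 hode hXb hXderiv_b
      exact hδne hXδ
    · push_neg at hdeg
      obtain ⟨s, hs, hsne⟩ := hdeg
      set A := Icc a s ∩ X ⁻¹' {xstar} with hAdef
      set B := Icc s c ∩ X ⁻¹' {xstar} with hBdef
      have hclosedA : IsClosed A := by
        have hcX : ContinuousOn X (Icc a s) :=
          hXcont.mono (fun z hz => le_trans ha.le hz.1)
        exact hcX.preimage_isClosed_of_isClosed isClosed_Icc isClosed_singleton
      have hclosedB : IsClosed B := by
        have hcX : ContinuousOn X (Icc s c) :=
          hXcont.mono (fun z hz => le_trans (le_trans ha.le hs.1.le) hz.1)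
        exact hcX.preimage_isClosed_of_isClosed isClosed_Icc isClosed_singleton
      have haA : a ∈ A := ⟨⟨le_refl a, hs.1.le⟩, by simp [hXa]⟩
      have hcB : c ∈ B := ⟨⟨hs.2.le, le_refl c⟩, by simp [hXc]⟩
      have hbddA : BddAbove A := (bddAbove_Icc).mono inter_subset_left
      have hbddB : BddBelow B := (bddBelow_Icc).mono inter_subset_left
      set p := sSup A with hpdef
      set q := sInf B with hqdef
      have hpA : p ∈ A := hclosedA.csSup_mem ⟨a, haA⟩ hbddA
      have hqB : q ∈ B := hclosedB.csInf_mem ⟨c, hcB⟩ hbddB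
      have hXp : X p = xstar := by simpa using hpA.2
      have hXq : X q = xstar := by simpa using hqB.2
      have hap : a ≤ p := hpA.1.1
      have hps : p < s := lt_of_le_of_ne hpA.1.2 (fun h => hsne (h ▸ hXp))
      have hsq : s < q := lt_of_le_of_ne hqB.1.1 (fun h => hsne (by rw [h]; exact hXq))
      have hqc : q ≤ c := hqB.1.2
      have hpq : p < q := lt_trans hps hsq
      have hne : ∀ u ∈ Ioo p q, X u ≠ xstar := by
        intro u hu hXu
        rcases le_or_gt u s with h | h
        · have huA : u ∈ A := ⟨⟨le_trans hap hu.1.le, h⟩, by simp [hXu]⟩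
          have := le_csSup hbddA huA
          linarith [hu.1]
        · have huB : u ∈ B := ⟨⟨h.le, le_trans hu.2.le hqc⟩, by simp [hXu]⟩
          have := csInf_le hbddB huB
          linarith [hu.2]
      have hsign := sign_dichotomy (le_trans ha.le hap) hXcont hne
      exact L_contra_X L hL f X xstar p q (lt_of_lt_of_le ha hap) hpq
        (by linarith) hXd1 hEX hub hXp hXq hsign
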